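/- Let A be a PBA and w a word on which A has only finitely many accepting runs. Then Pr(accepting runs on w) = 1 if and only if every run of A on w is accepting and limit-deterministic. -/

import Mathlib

open MeasureTheory
open scoped ENNReal

/-- `ρ` is a run of the PBA (with transition probabilities `δ`, initial distribution
`μ0`) on the word `w`: all its steps have positive probability. -/
def IsRunP {Q A : Type*} (δ : Q → A → Q → ℝ≥0∞) (μ0 : Q → ℝ≥0∞)
    (w : ℕ → A) (ρ : ℕ → Q) : Prop :=
  μ0 (ρ 0) ≠ 0 ∧ ∀ n, δ (ρ n) (w n) (ρ (n+1)) ≠ 0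

/-- Büchi acceptance: accepting states are visited infinitely often. -/
def AcceptingP {Q : Type*} (F : Set Q) (ρ : ℕ → Q) : Prop :=
  ∀ N, ∃ n ≥ N, ρ n ∈ F

/-- `ρ` is limit-deterministic: from some point on it only uses transitions of
probability 1 (i.e. only finitely many branching transitions). -/
def LimitDetP {Q A : Type*} (δ : Q → A → Q → ℝ≥0∞) (w : ℕ → A) (ρ : ℕ → Q) : Prop :=
  ∃ N, ∀ n ≥ N, δ (ρ n) (w n) (ρ (n+1)) = 1

section Aux

variable {Q : Type*} [MeasurableSpace Q] [MeasurableSingletonClass Q]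

lemma cyl_measurable (n : ℕ) (qs : ℕ → Q) :
    MeasurableSet {ρ : ℕ → Q | ∀ i ≤ n, ρ i = qs i} := by
  have h : {ρ : ℕ → Q | ∀ i ≤ n, ρ i = qs i}
      = ⋂ i, ⋂ (_ : i ≤ n), (fun ρ : ℕ → Q => ρ i) ⁻¹' {qs i} := by
    ext ρ; simp
  rw [h]
  exact MeasurableSet.iInter fun i => MeasurableSet.iInter fun _ =>
    (measurable_pi_apply i) (measurableSet_singleton _)

lemma singleton_measurable_pi (qs : ℕ → Q) : MeasurableSet ({qs} : Set (ℕ → Q)) := by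
  have h : ({qs} : Set (ℕ → Q)) = ⋂ i, (fun ρ : ℕ → Q => ρ i) ⁻¹' {qs i} := by
    ext ρ; simp [funext_iff]
  rw [h]
  exact MeasurableSet.iInter fun i =>
    (measurable_pi_apply i) (measurableSet_singleton _)

end Aux

/-- if a PBA has only finitely many accepting runs on `w`, then the
accepting runs on `w` have probability 1 iff every run on `w` is accepting and
limit-deterministic. -/
theorem stmt_14 {Q A : Type*} [Fintype Q] [MeasurableSpace Q] [MeasurableSingletonClass Q]
    (δ : Q → A → Q → ℝ≥0∞) (μ0 : Q → ℝ≥0∞) (F : Set Q)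
    (hδ : ∀ p a, ∑ q, δ p a q = 1) (hμ0 : ∑ q, μ0 q = 1)
    (w : ℕ → A)
    (μ : MeasureTheory.Measure (ℕ → Q)) [MeasureTheory.IsProbabilityMeasure μ]
    (hcyl : ∀ (n : ℕ) (qs : ℕ → Q),
      μ {ρ | ∀ i ≤ n, ρ i = qs i} =
        μ0 (qs 0) * ∏ i ∈ Finset.range n, δ (qs i) (w i) (qs (i+1)))
    (hfin : {ρ : ℕ → Q | IsRunP δ μ0 w ρ ∧ AcceptingP F ρ}.Finite) :
    μ {ρ : ℕ → Q | IsRunP δ μ0 w ρ ∧ AcceptingP F ρ} = 1 ↔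
      ∀ ρ : ℕ → Q, IsRunP δ μ0 w ρ → (AcceptingP F ρ ∧ LimitDetP δ w ρ) := by
  classical
  set S : Set (ℕ → Q) := {ρ : ℕ → Q | IsRunP δ μ0 w ρ ∧ AcceptingP F ρ} with hSdef
  have hS : MeasurableSet S := by
    have h : S = ⋃ σ ∈ S, {σ} := by simp
    rw [h]
    exact MeasurableSet.biUnion hfin.countable fun σ _ => singleton_measurable_pi σ
  constructor
  · -- forward direction
    intro h1 ρ hρ
    have hcompl : μ Sᶜ = 0 := by
      have h := measure_compl hS (measure_ne_top μ S)
      rw [measure_univ, h1] at h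
      simpa using h
    -- an index where two distinct sequences differ
    have Hidx : ∀ σ τ : ℕ → Q, ∃ i, σ ≠ τ → σ i ≠ τ i := by
      intro σ τ
      by_cases h : σ = τ
      · exact ⟨0, fun hc => absurd h hc⟩
      · obtain ⟨i, hi⟩ := Function.ne_iff.mp h
        exact ⟨i, fun _ => hi⟩
    choose idx hidx using Hidx
    set T := hfin.toFinset with hT
    -- each prefix-cylinder of ρ has positive measure
    have hpos : ∀ n : ℕ, μ {ρ' : ℕ → Q | ∀ i ≤ n, ρ' i = ρ i} ≠ 0 := by
      intro n
      rw [hcyl n ρ]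
      exact mul_ne_zero hρ.1 (Finset.prod_ne_zero_iff.mpr fun i _ => hρ.2 i)
    -- each prefix-cylinder of ρ meets S
    have hmeet : ∀ n : ℕ, ∃ σ ∈ S, ∀ i ≤ n, σ i = ρ i := by
      intro n
      by_contra h
      push_neg at h
      have hsub : {ρ' : ℕ → Q | ∀ i ≤ n, ρ' i = ρ i} ⊆ Sᶜ := by
        intro x hx hxS
        obtain ⟨i, hi, hne⟩ := h x hxS
        exact hne (hx i hi)
      exact hpos n (le_antisymm (hcompl ▸ measure_mono hsub) zero_le)
    -- pigeonhole: ρ itself lies in S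
    have hρS : ρ ∈ S := by
      by_contra hρS
      set N := T.sup (fun σ => idx σ ρ) with hN
      obtain ⟨σ, hσS, hσag⟩ := hmeet N
      have hσne : σ ≠ ρ := fun h => hρS (h ▸ hσS)
      have hσT : σ ∈ T := hfin.mem_toFinset.mpr hσS
      have hle : idx σ ρ ≤ N := Finset.le_sup (f := fun σ => idx σ ρ) hσT
      exact hidx σ ρ hσne (hσag _ hle)
    refine ⟨hρS.2, ?_⟩
    -- limit-determinism
    by_contra hnl
    rw [LimitDetP] at hnl
    push_neg at hnl
    set t := (T ×ˢ T).sup (fun p => idx p.1 p.2) with ht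
    obtain ⟨n, hnt, hne1⟩ := hnl t
    -- find a branching successor q' ≠ ρ (n+1)
    have hq' : ∃ q' ≠ ρ (n+1), δ (ρ n) (w n) q' ≠ 0 := by
      by_contra h
      push_neg at h
      have hsum := hδ (ρ n) (w n)
      rw [Finset.sum_eq_single (ρ (n+1)) (fun q _ hq => h q hq)
        (fun h' => absurd (Finset.mem_univ _) h')] at hsum
      exact hne1 hsum
    obtain ⟨q', hq'ne, hq'pos⟩ := hq'
    set qs' : ℕ → Q := Function.update ρ (n+1) q' with hqs'
    have hqs'agree : ∀ i ≤ n, qs' i = ρ i := by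
      intro i hi
      exact Function.update_of_ne (by omega) _ _
    have hqs'top : qs' (n+1) = q' := Function.update_self _ _ _
    -- the branch-cylinder has positive measure
    have hDpos : μ {ρ' : ℕ → Q | ∀ i ≤ n+1, ρ' i = qs' i} ≠ 0 := by
      rw [hcyl (n+1) qs']
      refine mul_ne_zero ?_ (Finset.prod_ne_zero_iff.mpr fun i hi => ?_)
      · rw [hqs'agree 0 (by omega)]; exact hρ.1
      · rw [Finset.mem_range] at hi
        rcases eq_or_lt_of_le (Nat.lt_succ_iff.mp hi) with h | h
        · subst h
          rw [hqs'agree i (le_refl i), hqs'top]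
          exact hq'pos
        · rw [hqs'agree i (by omega), hqs'agree (i+1) (by omega)]
          exact hρ.2 i
    -- but it is disjoint from S
    have hDsub : {ρ' : ℕ → Q | ∀ i ≤ n+1, ρ' i = qs' i} ⊆ Sᶜ := by
      intro x hx hxS
      by_cases hxρ : x = ρ
      · apply hq'ne
        rw [← hqs'top, ← hx (n+1) (le_refl _), hxρ]
      · have hxT : x ∈ T := hfin.mem_toFinset.mpr hxS
        have hρT : ρ ∈ T := hfin.mem_toFinset.mpr hρS
        have hle : idx x ρ ≤ t := by
          rw [ht]
          exact Finset.le_sup (f := fun p => idx p.1 p.2) (b := (x, ρ)) (Finset.mem_product.mpr ⟨hxT, hρT⟩)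
        have hlen : idx x ρ ≤ n + 1 := by omega
        apply hidx x ρ hxρ
        rw [hx _ hlen, hqs'agree _ (by omega)]
    exact hDpos (le_antisymm (hcompl ▸ measure_mono hDsub) zero_le)
  · -- reverse direction
    intro hall
    have h0 : μ {ρ : ℕ → Q | μ0 (ρ 0) = 0} = 0 := by
      have hsub : {ρ : ℕ → Q | μ0 (ρ 0) = 0} ⊆
          ⋃ p : Q, ({ρ' : ℕ → Q | ∀ i ≤ 0, ρ' i = (fun _ => p) i}
            ∩ {ρ : ℕ → Q | μ0 (ρ 0) = 0}) := by
        intro ρ hρ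
        refine Set.mem_iUnion.mpr ⟨ρ 0, ⟨?_, hρ⟩⟩
        intro i hi
        interval_cases i
        rfl
      refine le_antisymm (le_trans (measure_mono hsub) ?_) zero_le
      refine le_trans (measure_iUnion_le _) ?_
      have hz : ∀ p : Q, μ ({ρ' : ℕ → Q | ∀ i ≤ 0, ρ' i = (fun _ => p) i}
          ∩ {ρ : ℕ → Q | μ0 (ρ 0) = 0}) = 0 := by
        intro p
        rcases Set.eq_empty_or_nonempty ({ρ' : ℕ → Q | ∀ i ≤ 0, ρ' i = (fun _ => p) i}
          ∩ {ρ : ℕ → Q | μ0 (ρ 0) = 0}) with he | ⟨x, hx1, hx2⟩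
        · rw [he, measure_empty]
        · have hxp : x 0 = p := hx1 0 (le_refl 0)
          have hp : μ0 p = 0 := by rw [← hxp]; exact hx2
          refine le_antisymm (le_trans (measure_mono Set.inter_subset_left) ?_) zero_le
          rw [hcyl 0 (fun _ => p)]
          simp [hp]
      exact le_of_eq (ENNReal.tsum_eq_zero.mpr hz)
    have hNn : ∀ n : ℕ, μ {ρ : ℕ → Q | δ (ρ n) (w n) (ρ (n+1)) = 0} = 0 := by
      intro n
      set ext : (Fin (n+2) → Q) → (ℕ → Q) := fun v i => v ⟨min i (n+1), by omega⟩ with hext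
      have hsub : {ρ : ℕ → Q | δ (ρ n) (w n) (ρ (n+1)) = 0} ⊆
          ⋃ v : Fin (n+2) → Q, ({ρ' : ℕ → Q | ∀ i ≤ n+1, ρ' i = ext v i}
            ∩ {ρ : ℕ → Q | δ (ρ n) (w n) (ρ (n+1)) = 0}) := by
        intro ρ hρ
        refine Set.mem_iUnion.mpr ⟨fun j => ρ j, ⟨?_, hρ⟩⟩
        intro i hi
        simp only [hext]
        congr 1
        omega
      refine le_antisymm (le_trans (measure_mono hsub) ?_) zero_le
      refine le_trans (measure_iUnion_le _) ?_
      have hz : ∀ v : Fin (n+2) → Q, μ ({ρ' : ℕ → Q | ∀ i ≤ n+1, ρ' i = ext v i}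
          ∩ {ρ : ℕ → Q | δ (ρ n) (w n) (ρ (n+1)) = 0}) = 0 := by
        intro v
        rcases Set.eq_empty_or_nonempty ({ρ' : ℕ → Q | ∀ i ≤ n+1, ρ' i = ext v i}
          ∩ {ρ : ℕ → Q | δ (ρ n) (w n) (ρ (n+1)) = 0}) with he | ⟨x, hx1, hx2⟩
        · rw [he, measure_empty]
        · have e1 : x n = ext v n := hx1 n (by omega)
          have e2 : x (n+1) = ext v (n+1) := hx1 (n+1) (le_refl _)
          have hfac : δ (ext v n) (w n) (ext v (n+1)) = 0 := by
            rw [← e1, ← e2]; exact hx2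
          refine le_antisymm (le_trans (measure_mono Set.inter_subset_left) ?_) zero_le
          rw [hcyl (n+1) (ext v)]
          rw [Finset.prod_eq_zero (Finset.mem_range.mpr (Nat.lt_succ_self n)) hfac]
          simp
      exact le_of_eq (ENNReal.tsum_eq_zero.mpr hz)
    have hsub : Sᶜ ⊆ {ρ : ℕ → Q | μ0 (ρ 0) = 0} ∪
        ⋃ n : ℕ, {ρ : ℕ → Q | δ (ρ n) (w n) (ρ (n+1)) = 0} := by
      intro ρ hρc
      by_cases hr : IsRunP δ μ0 w ρ
      · exact absurd (show ρ ∈ S from ⟨hr, (hall ρ hr).1⟩) hρc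
      · rw [IsRunP] at hr
        push_neg at hr
        by_cases h0' : μ0 (ρ 0) = 0
        · exact Or.inl h0'
        · obtain ⟨m, hm⟩ := hr h0'
          exact Or.inr (Set.mem_iUnion.mpr ⟨m, hm⟩)
    have hU : μ (⋃ n : ℕ, {ρ : ℕ → Q | δ (ρ n) (w n) (ρ (n+1)) = 0}) = 0 := by
      refine le_antisymm (le_trans (measure_iUnion_le _) ?_) zero_le
      exact le_of_eq (ENNReal.tsum_eq_zero.mpr hNn)
    have hcompl : μ Sᶜ = 0 := by
      refine le_antisymm (le_trans (measure_mono hsub) ?_) zero_le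
      refine le_trans (measure_union_le _ _) ?_
      rw [h0, hU, add_zero]
    have hge : (1 : ℝ≥0∞) ≤ μ S := by
      have h := measure_union_le (μ := μ) S Sᶜ
      rw [Set.union_compl_self, measure_univ, hcompl, add_zero] at h
      exact h
    exact le_antisymm prob_le_one hge
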